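/- Let ε > 0, τ ∈ (0,1), and T > 0. Let y_j, r_j, p_j (j = 0,…,Ĵ+1) be CG iterates for a symmetric matrix H̄ and vector g ≠ 0, with r_j ≠ 0 and p_jᵀ H̄ p_j ≥ ε‖p_j‖² for all j = 0,…,Ĵ. Suppose ‖r_i‖ ≤ √T·τ^{i/2}‖r_0‖ for i = 0,…,Ĵ−1, that ‖r_Ĵ‖ ≥ √T·τ^{Ĵ/2}‖r_0‖, and that q(y_{Ĵ+1}) ≥ q(y_0) + r_0ᵀ(y_{Ĵ+1}−y_0) + (ε/2)‖y_{Ĵ+1}−y_0‖². Then q(y_0) − q(y_{Ĵ+1}) + (ε/2)‖y_0 − y_{Ĵ+1}‖² ≤ ‖r_0‖·‖r_Ĵ‖·τ^{−Ĵ/2} / (ε(1−√τ)). -/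

import Mathlib

open RealInnerProductSpace

/-- Bound on `q(y_0) − q(y_{Ĵ+1}) + (ε/2)‖y_0 − y_{Ĵ+1}‖²` in terms of the
residual norms, under slow residual decay. -/
theorem stmt4
    {n : ℕ} (Hb : EuclideanSpace ℝ (Fin n) →L[ℝ] EuclideanSpace ℝ (Fin n))
    (hsym : ∀ x y : EuclideanSpace ℝ (Fin n), ⟪Hb x, y⟫ = ⟪x, Hb y⟫)
    (ε τ T : ℝ) (hε : 0 < ε) (hτ : τ ∈ Set.Ioo (0:ℝ) 1) (hT : 0 < T)
    (g : EuclideanSpace ℝ (Fin n)) (hg : g ≠ 0)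
    (q : EuclideanSpace ℝ (Fin n) → ℝ)
    (hq : ∀ z, q z = 1/2 * ⟪z, Hb z⟫ + ⟪g, z⟫)
    (J : ℕ)
    (y r p : ℕ → EuclideanSpace ℝ (Fin n)) (α : ℕ → ℝ)
    (hy0 : y 0 = 0) (hr0 : r 0 = g) (hp0 : p 0 = -g)
    (hα : ∀ j ≤ J, α j = ‖r j‖^2 / ⟪p j, Hb (p j)⟫)
    (hyrec : ∀ j ≤ J, y (j+1) = y j + α j • p j)
    (hrrec : ∀ j ≤ J, r (j+1) = r j + α j • Hb (p j))
    (hprec : ∀ j ≤ J, p (j+1) = -(r (j+1)) + (‖r (j+1)‖^2 / ‖r j‖^2) • p j)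
    (hrne : ∀ j ≤ J, r j ≠ 0)
    (hpcurv : ∀ j ≤ J, ⟪p j, Hb (p j)⟫ ≥ ε * ‖p j‖^2)
    (hres : ∀ i < J, ‖r i‖ ≤ Real.sqrt T * Real.sqrt τ ^ i * ‖r 0‖)
    (hresJ : ‖r J‖ ≥ Real.sqrt T * Real.sqrt τ ^ J * ‖r 0‖)
    (hstrong : q (y (J+1)) ≥
      q (y 0) + ⟪r 0, y (J+1) - y 0⟫ + ε/2 * ‖y (J+1) - y 0‖^2) :
    q (y 0) - q (y (J+1)) + ε/2 * ‖y 0 - y (J+1)‖^2 ≤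
      ‖r 0‖ * ‖r J‖ * (Real.sqrt τ ^ J)⁻¹ / (ε * (1 - Real.sqrt τ)) := by
  obtain ⟨hτ0, hτ1⟩ := hτ
  have hsτ0 : 0 < Real.sqrt τ := Real.sqrt_pos.2 hτ0
  have hsτ1 : Real.sqrt τ < 1 := by
    rw [show (1:ℝ) = Real.sqrt 1 by simp]
    exact Real.sqrt_lt_sqrt hτ0.le hτ1
  -- key: ⟪p j, r j⟫ = -‖r j‖² and ‖r j‖ ≤ ‖p j‖ for j ≤ J
  have key : ∀ j, j ≤ J → ⟪p j, r j⟫ = -‖r j‖^2 ∧ ‖r j‖ ≤ ‖p j‖ := by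
    intro j
    induction j with
    | zero =>
      intro _
      constructor
      · rw [hp0, hr0, inner_neg_left, real_inner_self_eq_norm_sq]
      · rw [hp0, hr0, norm_neg]
    | succ k ih =>
      intro hk
      have hkJ : k ≤ J := Nat.le_of_succ_le hk
      obtain ⟨ihp, _⟩ := ih hkJ
      have hrk : r k ≠ 0 := hrne k hkJ
      have hpk0 : p k ≠ 0 := by
        intro h
        apply hrk
        have : ‖r k‖^2 = 0 := by
          have := ihp
          rw [h, inner_zero_left] at this
          linarith
        simpa [pow_eq_zero_iff] using this
      have hden : 0 < ⟪p k, Hb (p k)⟫ := by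
        have h1 : (0:ℝ) < ε * ‖p k‖^2 :=
          mul_pos hε (pow_pos (norm_pos_iff.2 hpk0) 2)
        exact lt_of_lt_of_le h1 (hpcurv k hkJ)
      have horth : ⟪p k, r (k+1)⟫ = 0 := by
        rw [hrrec k hkJ, inner_add_right, real_inner_smul_right, hα k hkJ, ihp,
          div_mul_cancel₀ _ (ne_of_gt hden)]
        ring
      have horth' : ⟪r (k+1), p k⟫ = 0 := by
        rw [real_inner_comm]; exact horth
      constructor
      · rw [hprec k hkJ, inner_add_left, inner_neg_left,
          real_inner_self_eq_norm_sq, real_inner_smul_left, horth]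
        ring
      · have hsq : ‖r (k+1)‖^2 ≤ ‖p (k+1)‖^2 := by
          have hexp : ‖p (k+1)‖^2 =
              ‖-(r (k+1))‖^2 + 2 * ⟪-(r (k+1)), (‖r (k+1)‖^2 / ‖r k‖^2) • p k⟫
                + ‖(‖r (k+1)‖^2 / ‖r k‖^2) • p k‖^2 := by
            rw [hprec k hkJ]; exact norm_add_sq_real _ _
          rw [hexp, inner_neg_left, real_inner_smul_right, horth']
          have h3 : (0:ℝ) ≤ ‖(‖r (k+1)‖^2 / ‖r k‖^2) • p k‖^2 := by positivity
          simp only [norm_neg]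
          nlinarith
        nlinarith [norm_nonneg (r (k+1)), norm_nonneg (p (k+1))]
  -- α j ≥ 0 and ‖α j • p j‖ ≤ ‖r j‖ / ε
  have hstep : ∀ j, j ≤ J → ‖α j • p j‖ ≤ ‖r j‖ / ε := by
    intro j hj
    obtain ⟨hpr, hnorm⟩ := key j hj
    have hrj : (0:ℝ) < ‖r j‖ := norm_pos_iff.2 (hrne j hj)
    have hpj : (0:ℝ) < ‖p j‖ := lt_of_lt_of_le hrj hnorm
    have hden : 0 < ⟪p j, Hb (p j)⟫ := by
      have h1 : (0:ℝ) < ε * ‖p j‖^2 := mul_pos hε (pow_pos hpj 2)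
      exact lt_of_lt_of_le h1 (hpcurv j hj)
    have hα0 : 0 ≤ α j := by
      rw [hα j hj]; positivity
    rw [norm_smul, Real.norm_eq_abs, abs_of_nonneg hα0, hα j hj]
    rw [div_mul_eq_mul_div, div_le_div_iff₀ hden hε]
    calc ‖r j‖^2 * ‖p j‖ * ε = ‖r j‖ * (‖p j‖ * ε) * ‖r j‖ := by ring
      _ ≤ ‖r j‖ * (‖p j‖ * ε) * ‖p j‖ := by
          exact mul_le_mul_of_nonneg_left hnorm (by positivity)
      _ = ‖r j‖ * (ε * ‖p j‖^2) := by ring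
      _ ≤ ‖r j‖ * ⟪p j, Hb (p j)⟫ :=
          mul_le_mul_of_nonneg_left (hpcurv j hj) hrj.le
  -- y (J+1) is a sum
  have hysum : ∀ k, k ≤ J → y (k+1) = ∑ j ∈ Finset.range (k+1), α j • p j := by
    intro k
    induction k with
    | zero => intro _; simp [hyrec 0 (Nat.zero_le J), hy0]
    | succ m ih =>
      intro hm
      rw [hyrec (m+1) hm, ih (Nat.le_of_succ_le hm)]
      rw [Finset.sum_range_succ _ (m+1)]
  -- residual norm bound: ‖r j‖ ≤ √τ^j * (‖r J‖ * (√τ^J)⁻¹) for j ≤ J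
  have hpow : (0:ℝ) < Real.sqrt τ ^ J := pow_pos hsτ0 J
  have h2 : Real.sqrt T * ‖r 0‖ ≤ ‖r J‖ * (Real.sqrt τ ^ J)⁻¹ := by
    have h2a : Real.sqrt T * ‖r 0‖ * Real.sqrt τ ^ J ≤ ‖r J‖ := by
      have heq : Real.sqrt T * Real.sqrt τ ^ J * ‖r 0‖
          = Real.sqrt T * ‖r 0‖ * Real.sqrt τ ^ J := by ring
      rw [ge_iff_le, heq] at hresJ
      exact hresJ
    rw [← div_eq_mul_inv]
    exact (le_div_iff₀ hpow).2 h2a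
  have hrbound : ∀ j, j ≤ J →
      ‖r j‖ ≤ Real.sqrt τ ^ j * (‖r J‖ * (Real.sqrt τ ^ J)⁻¹) := by
    intro j hj
    rcases lt_or_eq_of_le hj with h | h
    · calc ‖r j‖ ≤ Real.sqrt T * Real.sqrt τ ^ j * ‖r 0‖ := hres j h
        _ = Real.sqrt τ ^ j * (Real.sqrt T * ‖r 0‖) := by ring
        _ ≤ Real.sqrt τ ^ j * (‖r J‖ * (Real.sqrt τ ^ J)⁻¹) :=
            mul_le_mul_of_nonneg_left h2 (by positivity)
    · subst h
      rw [mul_comm (‖r j‖) _, ← mul_assoc, mul_inv_cancel₀ (ne_of_gt hpow), one_mul]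
  -- geometric sum
  have hgeom : ∑ j ∈ Finset.range (J+1), Real.sqrt τ ^ j ≤ (1 - Real.sqrt τ)⁻¹ := by
    rw [geom_sum_eq (ne_of_lt hsτ1) (J+1)]
    rw [div_le_iff_of_neg (by linarith : Real.sqrt τ - 1 < 0)]
    have h3 : 0 ≤ Real.sqrt τ ^ (J+1) := by positivity
    have h4 : 0 < 1 - Real.sqrt τ := by linarith
    calc (1 - Real.sqrt τ)⁻¹ * (Real.sqrt τ - 1) = -1 := by field_simp; ring
      _ ≤ Real.sqrt τ ^ (J+1) - 1 := by linarith
  have hrJ0 : (0:ℝ) ≤ ‖r J‖ * (Real.sqrt τ ^ J)⁻¹ := by positivity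
  have hsumr : ∑ j ∈ Finset.range (J+1), ‖r j‖ ≤
      ‖r J‖ * (Real.sqrt τ ^ J)⁻¹ * (1 - Real.sqrt τ)⁻¹ := by
    calc ∑ j ∈ Finset.range (J+1), ‖r j‖
        ≤ ∑ j ∈ Finset.range (J+1), Real.sqrt τ ^ j * (‖r J‖ * (Real.sqrt τ ^ J)⁻¹) := by
          apply Finset.sum_le_sum
          intro j hj
          exact hrbound j (Nat.lt_succ_iff.mp (Finset.mem_range.mp hj))
      _ = (∑ j ∈ Finset.range (J+1), Real.sqrt τ ^ j) * (‖r J‖ * (Real.sqrt τ ^ J)⁻¹) := by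
          rw [Finset.sum_mul]
      _ ≤ (1 - Real.sqrt τ)⁻¹ * (‖r J‖ * (Real.sqrt τ ^ J)⁻¹) :=
          mul_le_mul_of_nonneg_right hgeom hrJ0
      _ = ‖r J‖ * (Real.sqrt τ ^ J)⁻¹ * (1 - Real.sqrt τ)⁻¹ := by ring
  -- bound on ‖y (J+1) - y 0‖
  have hdb : ‖y (J+1) - y 0‖ ≤ ‖r J‖ * (Real.sqrt τ ^ J)⁻¹ * (1 - Real.sqrt τ)⁻¹ / ε := by
    rw [hy0, sub_zero, hysum J le_rfl]
    calc ‖∑ j ∈ Finset.range (J+1), α j • p j‖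
        ≤ ∑ j ∈ Finset.range (J+1), ‖α j • p j‖ := norm_sum_le _ _
      _ ≤ ∑ j ∈ Finset.range (J+1), ‖r j‖ / ε := by
          apply Finset.sum_le_sum
          intro j hj
          exact hstep j (Nat.lt_succ_iff.mp (Finset.mem_range.mp hj))
      _ = (∑ j ∈ Finset.range (J+1), ‖r j‖) / ε := by rw [Finset.sum_div]
      _ ≤ ‖r J‖ * (Real.sqrt τ ^ J)⁻¹ * (1 - Real.sqrt τ)⁻¹ / ε :=
          div_le_div_of_nonneg_right hsumr hε.le
  -- assemble
  have hcs : -⟪r 0, y (J+1) - y 0⟫ ≤ ‖r 0‖ * ‖y (J+1) - y 0‖ := by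
    have h5 := abs_real_inner_le_norm (r 0) (y (J+1) - y 0)
    have h6 := neg_abs_le ⟪r 0, y (J+1) - y 0⟫
    linarith
  have hLHS : q (y 0) - q (y (J+1)) + ε/2 * ‖y 0 - y (J+1)‖^2 ≤
      ‖r 0‖ * ‖y (J+1) - y 0‖ := by
    rw [norm_sub_rev]
    linarith [hstrong]
  have h1s : 0 < 1 - Real.sqrt τ := by linarith
  calc q (y 0) - q (y (J+1)) + ε/2 * ‖y 0 - y (J+1)‖^2
      ≤ ‖r 0‖ * ‖y (J+1) - y 0‖ := hLHS
    _ ≤ ‖r 0‖ * (‖r J‖ * (Real.sqrt τ ^ J)⁻¹ * (1 - Real.sqrt τ)⁻¹ / ε) :=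
        mul_le_mul_of_nonneg_left hdb (norm_nonneg _)
    _ = ‖r 0‖ * ‖r J‖ * (Real.sqrt τ ^ J)⁻¹ / (ε * (1 - Real.sqrt τ)) := by
        simp only [div_eq_mul_inv, mul_inv]
        ring
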